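/- Let 𝓑 be a directed family with U ∈ 𝓑. Every constructible set X ⊆ U admits a swiss cheese decomposition: finitely many pairwise disjoint swiss cheeses S₁,…,S_n whose union is X, such that no wheel of one S_i equals a hole of another S_j. -/

import Mathlib

variable {U : Type*}

/-- A directed family: nonempty sets, any two nested or disjoint. -/
def DirFam (𝓑 : Set (Set U)) : Prop :=
  (∀ B ∈ 𝓑, B.Nonempty) ∧
    ∀ B₀ ∈ 𝓑, ∀ B₁ ∈ 𝓑, B₀ ⊆ B₁ ∨ B₁ ⊆ B₀ ∨ B₀ ∩ B₁ = ∅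

/-- Constructible sets: finite boolean combinations of balls. -/
inductive Constr (𝓑 : Set (Set U)) : Set U → Prop
  | ball {B : Set U} : B ∈ 𝓑 → Constr 𝓑 B
  | compl {X : Set U} : Constr 𝓑 X → Constr 𝓑 Xᶜ
  | union {X Y : Set U} : Constr 𝓑 X → Constr 𝓑 Y → Constr 𝓑 (X ∪ Y)

/-- A swiss cheese decomposition of X: wheels A i with hole sets H i, each hole a proper
sub-ball of its wheel, holes pairwise incomparable, cheeses pairwise disjoint, no wheel
equal to a hole of any cheese, and union X. -/
def IsSCD (𝓑 : Set (Set U)) (X : Set U) (n : ℕ) (A : Fin n → Set U)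
    (H : Fin n → Set (Set U)) : Prop :=
  (∀ i, A i ∈ 𝓑) ∧ (∀ i, (H i).Finite) ∧ (∀ i, H i ⊆ 𝓑) ∧
  (∀ i, ∀ B ∈ H i, B ⊂ A i) ∧
  (∀ i, ∀ B ∈ H i, ∀ C ∈ H i, B ≠ C → ¬B ⊆ C) ∧
  (∀ i j, i ≠ j → (A i \ ⋃₀ H i) ∩ (A j \ ⋃₀ H j) = ∅) ∧
  (∀ i j, A i ∉ H j) ∧
  (⋃ i, A i \ ⋃₀ H i) = X

namespace SCDAux

open Set

/-- The atom at `B`: remove from `B` all strictly smaller balls of `F`. -/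
def cheese (F : Set (Set U)) (B : Set U) : Set U := B \ ⋃₀ {D ∈ F | D ⊂ B}

/-- `B ∈ F` and its atom is contained in `X`. -/
def Good (F : Set (Set U)) (X B : Set U) : Prop := B ∈ F ∧ cheese F B ⊆ X

/-- `B` is the least strict superset of `C` in `F`. -/
def IsChild (F : Set (Set U)) (C B : Set U) : Prop :=
  B ∈ F ∧ C ⊂ B ∧ ∀ D ∈ F, C ⊂ D → B ⊆ D

/-- `m` is in the good component below `B`: every element of `F` between them is good. -/
def Comp (F : Set (Set U)) (X B m : Set U) : Prop :=
  m ∈ F ∧ m ⊆ B ∧ ∀ D ∈ F, m ⊆ D → D ⊆ B → Good F X D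

/-- A wheel: good, with no good parent. -/
def Wheel (F : Set (Set U)) (X B : Set U) : Prop :=
  Good F X B ∧ ∀ P, IsChild F B P → ¬ Good F X P

/-- Holes of the wheel `B`: bad children of members of its good component. -/
def holes (F : Set (Set U)) (X B : Set U) : Set (Set U) :=
  {h | h ∈ F ∧ ¬ Good F X h ∧ ∃ P, IsChild F h P ∧ Comp F X B P}

lemma exists_least {S : Set (Set U)} (hfin : S.Finite) (hne : S.Nonempty)
    (hchain : ∀ a ∈ S, ∀ b ∈ S, a ⊆ b ∨ b ⊆ a) : ∃ m ∈ S, ∀ b ∈ S, m ⊆ b := by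
  obtain ⟨m, hmS, hmin⟩ := hfin.exists_minimal hne
  exact ⟨m, hmS, fun b hb => (hchain m hmS b hb).elim id (fun h => hmin hb h)⟩

lemma exists_greatest {S : Set (Set U)} (hfin : S.Finite) (hne : S.Nonempty)
    (hchain : ∀ a ∈ S, ∀ b ∈ S, a ⊆ b ∨ b ⊆ a) : ∃ m ∈ S, ∀ b ∈ S, b ⊆ m := by
  obtain ⟨m, hmS, hmax⟩ := hfin.exists_maximal hne
  exact ⟨m, hmS, fun b hb => (hchain m hmS b hb).elim (fun h => hmax hb h) id⟩

section Main

variable {𝓑 F : Set (Set U)} {X : Set U}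

lemma nested (hd : DirFam 𝓑) (hFB : F ⊆ 𝓑) {D₁ D₂ : Set U} (h1 : D₁ ∈ F) (h2 : D₂ ∈ F)
    (hne : (D₁ ∩ D₂).Nonempty) : D₁ ⊆ D₂ ∨ D₂ ⊆ D₁ := by
  rcases hd.2 D₁ (hFB h1) D₂ (hFB h2) with h | h | h
  · exact Or.inl h
  · exact Or.inr h
  · rw [h] at hne; exact absurd hne (by simp [Set.not_nonempty_empty])

lemma minball (hd : DirFam 𝓑) (hF : F.Finite) (hFB : F ⊆ 𝓑) (hUF : (univ : Set U) ∈ F)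
    (x : U) : ∃ m ∈ F, x ∈ m ∧ ∀ D ∈ F, x ∈ D → m ⊆ D := by
  obtain ⟨m, hm, hleast⟩ := exists_least (S := {D | D ∈ F ∧ x ∈ D})
    (hF.subset (fun D hD => hD.1)) ⟨univ, hUF, mem_univ x⟩
    (fun a ha b hb => nested hd hFB ha.1 hb.1 ⟨x, ha.2, hb.2⟩)
  exact ⟨m, hm.1, hm.2, fun D hD hxD => hleast D ⟨hD, hxD⟩⟩

lemma cheese_subset {m D : Set U} (hd : DirFam 𝓑) (hFB : F ⊆ 𝓑) (hm : m ∈ F)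
    {x : U} (hx : x ∈ cheese F m) (hD : D ∈ F) (hxD : x ∈ D) : m ⊆ D := by
  rcases nested hd hFB hm hD ⟨x, hx.1, hxD⟩ with h | h
  · exact h
  · rcases h.eq_or_ssubset with h | h
    · exact h.ge
    · exact absurd hxD (fun hc => hx.2 ⟨D, ⟨hD, h⟩, hc⟩)

lemma minball_mem_cheese {m : Set U} (hm : m ∈ F) {x : U} (hxm : x ∈ m)
    (hmin : ∀ D ∈ F, x ∈ D → m ⊆ D) : x ∈ cheese F m := by
  refine ⟨hxm, fun hc => ?_⟩
  obtain ⟨D, ⟨hD, hDm⟩, hxD⟩ := hc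
  exact absurd (hmin D hD hxD) (fun h => hDm.not_subset h)

lemma bad_cheese (hd : DirFam 𝓑) (hFB : F ⊆ 𝓑)
    (hmeas : ∀ x y : U, (∀ B ∈ F, x ∈ B ↔ y ∈ B) → (x ∈ X ↔ y ∈ X))
    {h : Set U} (hh : h ∈ F) (hbad : ¬ Good F X h) {x : U} (hx : x ∈ cheese F h) :
    x ∉ X := by
  have : ¬ cheese F h ⊆ X := fun hc => hbad ⟨hh, hc⟩
  obtain ⟨y, hyc, hyX⟩ := not_subset.mp this
  intro hxX
  refine hyX ((hmeas x y (fun B hB => ?_)).mp hxX)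
  constructor
  · intro hxB; exact cheese_subset hd hFB hh hx hB hxB hyc.1
  · intro hyB; exact cheese_subset hd hFB hh hyc hB hyB hx.1

lemma exists_parent (hd : DirFam 𝓑) (hF : F.Finite) (hFB : F ⊆ 𝓑)
    {m B : Set U} (hm : m ∈ F) (hB : B ∈ F) (hss : m ⊂ B) :
    ∃ P, IsChild F m P ∧ P ⊆ B := by
  have hmne : m.Nonempty := hd.1 m (hFB hm)
  obtain ⟨P, hP, hleast⟩ := exists_least (S := {D | D ∈ F ∧ m ⊂ D ∧ D ⊆ B})
    (hF.subset (fun D hD => hD.1)) ⟨B, hB, hss, subset_rfl⟩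
    (fun a ha b hb => nested hd hFB ha.1 hb.1
      (hmne.mono (subset_inter ha.2.1.le hb.2.1.le)))
  refine ⟨P, ⟨hP.1, hP.2.1, fun D hD hmD => ?_⟩, hP.2.2⟩
  rcases nested hd hFB hP.1 hD (hmne.mono (subset_inter hP.2.1.le hmD.le)) with h | h
  · exact h
  · exact hleast D ⟨hD, hmD, h.trans hP.2.2⟩

lemma comp_good {B m : Set U} (hc : Comp F X B m) : Good F X m :=
  hc.2.2 m hc.1 subset_rfl hc.2.1

lemma mem_cheese_of_comp (hd : DirFam 𝓑) (hFB : F ⊆ 𝓑)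
    {B m : Set U} (hc : Comp F X B m) {x : U} (hx : x ∈ cheese F m) :
    x ∈ B \ ⋃₀ holes F X B := by
  refine ⟨hc.2.1 hx.1, fun hmem => ?_⟩
  obtain ⟨h, ⟨hhF, hbad, P, hchild, hcompP⟩, hxh⟩ := hmem
  have hmh : m ⊆ h := cheese_subset hd hFB hc.1 hx hhF hxh
  have hhB : h ⊆ B := hchild.2.1.le.trans hcompP.2.1
  exact hbad (hc.2.2 h hhF hmh hhB)

lemma comp_of_mem (hd : DirFam 𝓑) (hF : F.Finite) (hFB : F ⊆ 𝓑)
    (hUF : (univ : Set U) ∈ F)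
    {B : Set U} (hgB : Good F X B) {x : U} (hxB : x ∈ B)
    (hxh : x ∉ ⋃₀ holes F X B) :
    ∃ m, Comp F X B m ∧ x ∈ cheese F m := by
  obtain ⟨m, hmF, hxm, hmin⟩ := minball hd hF hFB hUF x
  have hmB : m ⊆ B := hmin B hgB.1 hxB
  by_cases hcomp : ∀ D ∈ F, m ⊆ D → D ⊆ B → Good F X D
  · exact ⟨m, ⟨hmF, hmB, hcomp⟩, minball_mem_cheese hmF hxm hmin⟩
  push_neg at hcomp
  obtain ⟨D₀, hD₀F, hmD₀, hD₀B, hD₀bad⟩ := hcomp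
  obtain ⟨h, hhS, hgreat⟩ := exists_greatest
    (S := {D | D ∈ F ∧ m ⊆ D ∧ D ⊆ B ∧ ¬ Good F X D})
    (hF.subset (fun D hD => hD.1)) ⟨D₀, hD₀F, hmD₀, hD₀B, hD₀bad⟩
    (fun a ha b hb => nested hd hFB ha.1 hb.1 ⟨x, ha.2.1 hxm, hb.2.1 hxm⟩)
  have hhB : h ⊂ B := by
    rcases hhS.2.2.1.eq_or_ssubset with h' | h'
    · exact absurd (h' ▸ hgB) hhS.2.2.2
    · exact h'
  obtain ⟨P, hchild, hPB⟩ := exists_parent hd hF hFB hhS.1 hgB.1 hhB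
  have hcompP : Comp F X B P := by
    refine ⟨hchild.1, hPB, fun D hD hPD hDB => ?_⟩
    by_contra hbadD
    have : D ⊆ h := hgreat D ⟨hD, hhS.2.1.trans (hchild.2.1.le.trans hPD), hDB, hbadD⟩
    exact (ssubset_of_ssubset_of_subset hchild.2.1 hPD).not_subset this
  exact absurd ⟨h, ⟨hhS.1, hhS.2.2.2, P, hchild, hcompP⟩, hhS.2.1 hxm⟩ hxh

lemma cover (hd : DirFam 𝓑) (hF : F.Finite) (hFB : F ⊆ 𝓑)
    {m : Set U} (hm : Good F X m) : ∃ B, Wheel F X B ∧ Comp F X B m := by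
  suffices H : ∀ k : ℕ, ∀ m : Set U, Good F X m →
      ({D | D ∈ F ∧ m ⊂ D}).ncard ≤ k → ∃ B, Wheel F X B ∧ Comp F X B m from
    H _ m hm le_rfl
  intro k
  induction k with
  | zero =>
    intro m hm hcard
    have hempty : {D | D ∈ F ∧ m ⊂ D} = ∅ :=
      (Set.ncard_eq_zero (hF.subset (fun D hD => hD.1))).mp (Nat.le_zero.mp hcard)
    refine ⟨m, ⟨hm, fun P hP => ?_⟩, hm.1, subset_rfl,
      fun D hD h1 h2 => (subset_antisymm h2 h1) ▸ hm⟩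
    exact absurd (show P ∈ {D | D ∈ F ∧ m ⊂ D} from ⟨hP.1, hP.2.1⟩) (hempty ▸ Set.notMem_empty P)
  | succ k ih =>
    intro m hm hcard
    by_cases hw : Wheel F X m
    · exact ⟨m, hw, hm.1, subset_rfl, fun D hD h1 h2 => (subset_antisymm h2 h1) ▸ hm⟩
    have hex : ∃ P, IsChild F m P ∧ Good F X P := by
      by_contra hc
      push_neg at hc
      exact hw ⟨hm, hc⟩
    obtain ⟨P, hchild, hgP⟩ := hex
    have hsub : {D | D ∈ F ∧ P ⊂ D} ⊂ {D | D ∈ F ∧ m ⊂ D} := by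
      constructor
      · intro D hD
        exact ⟨hD.1, hchild.2.1.trans hD.2⟩
      · intro hcon
        exact (hcon ⟨hchild.1, hchild.2.1⟩).2.ne rfl
    have hlt : ({D | D ∈ F ∧ P ⊂ D}).ncard < ({D | D ∈ F ∧ m ⊂ D}).ncard :=
      Set.ncard_lt_ncard hsub (hF.subset (fun D hD => hD.1))
    obtain ⟨B, hwB, hcompB⟩ := ih P hgP (by omega)
    refine ⟨B, hwB, hm.1, (hchild.2.1.le).trans hcompB.2.1, fun D hD h1 h2 => ?_⟩
    rcases h1.eq_or_ssubset with h' | h'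
    · exact h' ▸ hm
    · exact hcompB.2.2 D hD (hchild.2.2 D hD h') h2

lemma disj_aux (hd : DirFam 𝓑) (hF : F.Finite) (hFB : F ⊆ 𝓑)
    {B₁ B₂ m : Set U} (hw1 : Wheel F X B₁) (hB₂ : B₂ ∈ F) (hc2 : Comp F X B₂ m)
    (hmB₁ : m ⊆ B₁) (hss : B₁ ⊂ B₂) : False := by
  obtain ⟨P, hchild, hPB⟩ := exists_parent hd hF hFB hw1.1.1 hB₂ hss
  exact hw1.2 P hchild (hc2.2.2 P hchild.1 (hmB₁.trans hchild.2.1.le) hPB)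

lemma wheel_disj (hd : DirFam 𝓑) (hF : F.Finite) (hFB : F ⊆ 𝓑)
    (hUF : (univ : Set U) ∈ F) {B₁ B₂ : Set U}
    (hw1 : Wheel F X B₁) (hw2 : Wheel F X B₂) (hne : B₁ ≠ B₂) :
    (B₁ \ ⋃₀ holes F X B₁) ∩ (B₂ \ ⋃₀ holes F X B₂) = ∅ := by
  ext x
  simp only [Set.mem_inter_iff, Set.mem_empty_iff_false, iff_false, not_and]
  intro hx1 hx2
  obtain ⟨m₁, hc1, hch1⟩ := comp_of_mem hd hF hFB hUF hw1.1 hx1.1 hx1.2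
  obtain ⟨m₂, hc2, hch2⟩ := comp_of_mem hd hF hFB hUF hw2.1 hx2.1 hx2.2
  have hm12 : m₁ = m₂ :=
    subset_antisymm (cheese_subset hd hFB hc1.1 hch1 hc2.1 hch2.1)
      (cheese_subset hd hFB hc2.1 hch2 hc1.1 hch1.1)
  rcases nested hd hFB hw1.1.1 hw2.1.1 ⟨x, hx1.1, hx2.1⟩ with h | h
  · exact disj_aux hd hF hFB hw1 hw2.1.1 hc2 (hm12 ▸ hc1.2.1) (h.ssubset_of_ne hne)
  · exact disj_aux hd hF hFB hw2 hw1.1.1 hc1 (hm12 ▸ hc2.2.1) (h.ssubset_of_ne hne.symm)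

lemma hole_ssubset {B h : Set U} (hh : h ∈ holes F X B) : h ⊂ B := by
  obtain ⟨_, _, P, hchild, hcomp⟩ := hh
  exact ssubset_of_ssubset_of_subset hchild.2.1 hcomp.2.1

lemma holes_incomp {B h₁ h₂ : Set U} (h1 : h₁ ∈ holes F X B) (h2 : h₂ ∈ holes F X B)
    (hne : h₁ ≠ h₂) : ¬ h₁ ⊆ h₂ := by
  intro hsub
  obtain ⟨hF₁, hbad₁, P, hchild, hcompP⟩ := h1
  have hPh₂ : P ⊆ h₂ := hchild.2.2 h₂ h2.1 (hsub.ssubset_of_ne hne)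
  exact h2.2.1 (hcompP.2.2 h₂ h2.1 hPh₂ (hole_ssubset h2).le)

end Main

lemma exists_F (𝓑 : Set (Set U)) (hU : (Set.univ : Set U) ∈ 𝓑) {X : Set U}
    (hX : Constr 𝓑 X) :
    ∃ F : Set (Set U), F.Finite ∧ F ⊆ 𝓑 ∧ (Set.univ : Set U) ∈ F ∧
      ∀ x y : U, (∀ B ∈ F, x ∈ B ↔ y ∈ B) → (x ∈ X ↔ y ∈ X) := by
  induction hX with
  | @ball B hB =>
    exact ⟨{B, Set.univ}, (Set.finite_singleton _).insert _,
      by simp [Set.insert_subset_iff, hB, hU], by simp, fun x y h => h B (by simp)⟩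
  | @compl Y hY ih =>
    obtain ⟨F, h1, h2, h3, h4⟩ := ih
    exact ⟨F, h1, h2, h3, fun x y h => not_congr (h4 x y h)⟩
  | @union Y Z hY hZ ihY ihZ =>
    obtain ⟨F₁, a1, a2, a3, a4⟩ := ihY
    obtain ⟨F₂, b1, b2, b3, b4⟩ := ihZ
    refine ⟨F₁ ∪ F₂, a1.union b1, Set.union_subset a2 b2, Or.inl a3, fun x y h => ?_⟩
    exact or_congr (a4 x y fun B hB => h B (Or.inl hB)) (b4 x y fun B hB => h B (Or.inr hB))

end SCDAux

/-- Every constructible set admits a swiss cheese decomposition. -/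
theorem stmt4 (𝓑 : Set (Set U)) (h : DirFam 𝓑) (hU : (Set.univ : Set U) ∈ 𝓑)
    (X : Set U) (hX : Constr 𝓑 X) :
    ∃ (n : ℕ) (A : Fin n → Set U) (H : Fin n → Set (Set U)), IsSCD 𝓑 X n A H := by
  classical
  obtain ⟨F, hF, hFB, hUF, hmeas⟩ := SCDAux.exists_F 𝓑 hU hX
  have hWfin : {B | SCDAux.Wheel F X B}.Finite := hF.subset (fun B hB => hB.1.1)
  set n := hWfin.toFinset.card with hn
  set e := hWfin.toFinset.equivFin with he
  refine ⟨n, fun i => (e.symm i).1, fun i => SCDAux.holes F X (e.symm i).1, ?_⟩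
  have hAW : ∀ i, SCDAux.Wheel F X (e.symm i).1 := fun i =>
    hWfin.mem_toFinset.mp (e.symm i).2
  have hinj : ∀ i j : Fin n, i ≠ j → (e.symm i).1 ≠ (e.symm j).1 := by
    intro i j hij hc
    exact hij (e.symm.injective (Subtype.ext hc))
  refine ⟨fun i => hFB (hAW i).1.1,
    fun i => hF.subset (fun B hB => hB.1),
    fun i => fun B hB => hFB hB.1,
    fun i B hB => SCDAux.hole_ssubset hB,
    fun i B hB C hC hBC => SCDAux.holes_incomp hB hC hBC,
    fun i j hij => SCDAux.wheel_disj h hF hFB hUF (hAW i) (hAW j) (hinj i j hij),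
    fun i j hc => hc.2.1 (hAW i).1,
    ?_⟩
  ext x
  simp only [Set.mem_iUnion]
  constructor
  · rintro ⟨i, hxi⟩
    obtain ⟨m, hcomp, hch⟩ := SCDAux.comp_of_mem h hF hFB hUF (hAW i).1 hxi.1 hxi.2
    exact (SCDAux.comp_good hcomp).2 hch
  · intro hxX
    obtain ⟨m, hmF, hxm, hmin⟩ := SCDAux.minball h hF hFB hUF x
    have hxch : x ∈ SCDAux.cheese F m := SCDAux.minball_mem_cheese hmF hxm hmin
    have hgood : SCDAux.Good F X m := by
      by_contra hbad
      exact SCDAux.bad_cheese h hFB hmeas hmF hbad hxch hxX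
    obtain ⟨B, hwB, hcompB⟩ := SCDAux.cover h hF hFB hgood
    refine ⟨e ⟨B, hWfin.mem_toFinset.mpr hwB⟩, ?_⟩
    have hBe : (e.symm (e ⟨B, hWfin.mem_toFinset.mpr hwB⟩)).1 = B := by
      rw [Equiv.symm_apply_apply]
    rw [hBe]
    exact SCDAux.mem_cheese_of_comp h hFB hcompB hxch
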